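/- Let (R,Δ) be an odd form ring, n ∈ ℕ, and (I,Ω) an odd form ideal of (R,Δ). Then the principal congruence subgroup U_{2n+1}((R,Δ),(I,Ω)) is a normal subgroup of Ũ_{2n+1}((R,Δ),(I,Ω)). -/

import Mathlib

open scoped BigOperators

noncomputable section

/-- The index set `Θ = {-n, …, n}` for the odd-dimensional unitary group. -/
abbrev Idx (n : ℕ) : Type := {i : ℤ // i ∈ Finset.Icc (-(n : ℤ)) (n : ℤ)}

namespace Idx

/-- Negation of an index. -/
def neg {n : ℕ} (i : Idx n) : Idx n :=
  ⟨-i.1, by have h := i.2; rw [Finset.mem_Icc] at h ⊢; omega⟩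

/-- The index `0`. -/
def zero (n : ℕ) : Idx n := ⟨0, by rw [Finset.mem_Icc]; omega⟩

/-- Construct an index from an integer. -/
def of (n : ℕ) (i : ℤ) (h1 : -(n : ℤ) ≤ i) (h2 : i ≤ (n : ℤ)) : Idx n :=
  ⟨i, Finset.mem_Icc.mpr ⟨h1, h2⟩⟩

end Idx

/-- The positive indices `{1, …, n}`. -/
def posIdx (n : ℕ) : Finset (Idx n) := Finset.univ.filter (fun i => 0 < i.1)

/-- The position of an index in the ordering `1, …, n, 0, -n, …, -1`. -/
def ordIdx {n : ℕ} (i : Idx n) : ℤ :=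
  if 0 < i.1 then i.1 else if i.1 = 0 then (n : ℤ) + 1 else 2 * (n : ℤ) + 2 + i.1

/-- The group `GL_{2n+1}(R)` of invertible `(2n+1) × (2n+1)` matrices. -/
abbrev GLn (R : Type*) [Ring R] (n : ℕ) : Type _ := (Matrix (Idx n) (Idx n) R)ˣ

/-- `J(Ω) = {y | ∃ z, (y, z) ∈ Ω}`. -/
def JSet {R : Type*} (Ω : Set (R × R)) : Set R := {y | ∃ z, (y, z) ∈ Ω}

/-- `M(R, Δ) = {u | u_0 ∈ J(Δ)}`. -/
def MRD {R : Type*} (Δ : Set (R × R)) (n : ℕ) : Set (Idx n → R) :=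
  {u | u (Idx.zero n) ∈ JSet Δ}

/-- `M(I, Ω) = {u | u_i ∈ I for i ∈ Θ_hb, u_0 ∈ J(Ω)}`. -/
def MIO {R : Type*} (I : Set R) (Ω : Set (R × R)) (n : ℕ) : Set (Idx n → R) :=
  {u | (∀ i : Idx n, i.1 ≠ 0 → u i ∈ I) ∧ u (Idx.zero n) ∈ JSet Ω}

/-- The data of an odd quadruple `(R, ⁻, λ, μ)`: a ring with an anti-isomorphism `bar`,
a symmetry `lam` and an element `mu` with `mu = bar mu * lam`. -/
structure OddFormRingData (R : Type*) [Ring R] where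
  bar : R → R
  lam : R
  mu : R
  bar_bijective : Function.Bijective bar
  bar_add : ∀ x y : R, bar (x + y) = bar x + bar y
  bar_mul : ∀ x y : R, bar (x * y) = bar y * bar x
  bar_one : bar 1 = 1
  bar_bar : ∀ x : R, bar (bar x) = lam * x * bar lam
  mu_symm : mu = bar mu * lam

namespace OddFormRingData

variable {R : Type*} [Ring R] (D : OddFormRingData R)

/-- Heisenberg addition `∔` on `R × R`. -/
def hAdd (a b : R × R) : R × R := (a.1 + b.1, a.2 + b.2 - D.bar a.1 * D.mu * b.1)

/-- Heisenberg negation. -/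
def hNeg (a : R × R) : R × R := (-a.1, -a.2 - D.bar a.1 * D.mu * a.1)

/-- Heisenberg subtraction `∸`. -/
def hSub (a b : R × R) : R × R := D.hAdd a (D.hNeg b)

/-- The scalar operation `(x, y) • a = (x a, ā y a)`. -/
def hSMul (a : R × R) (r : R) : R × R := (a.1 * r, D.bar r * a.2 * r)

/-- `Δ_min = {(0, x - x̄ λ) | x ∈ R}`. -/
def DeltaMin : Set (R × R) := {p | ∃ x : R, p = (0, x - D.bar x * D.lam)}

/-- `Δ_max = {(x, y) | x̄ μ x + y + ȳ λ = 0}`. -/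
def DeltaMax : Set (R × R) := {p | D.bar p.1 * D.mu * p.1 + p.2 + D.bar p.2 * D.lam = 0}

/-- `Δ` is an odd form parameter. -/
structure IsFormParam (Δ : Set (R × R)) : Prop where
  add_mem : ∀ a ∈ Δ, ∀ b ∈ Δ, D.hAdd a b ∈ Δ
  neg_mem : ∀ a ∈ Δ, D.hNeg a ∈ Δ
  smul_mem : ∀ a ∈ Δ, ∀ r : R, D.hSMul a r ∈ Δ
  min_le : D.DeltaMin ⊆ Δ
  le_max : Δ ⊆ D.DeltaMax

/-- `I` is an involution invariant (two-sided) ideal of `R`. -/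
structure IsInvIdeal (I : Set R) : Prop where
  zero_mem : (0 : R) ∈ I
  add_mem : ∀ x ∈ I, ∀ y ∈ I, x + y ∈ I
  neg_mem : ∀ x ∈ I, -x ∈ I
  mul_left : ∀ r : R, ∀ x ∈ I, r * x ∈ I
  mul_right : ∀ r : R, ∀ x ∈ I, x * r ∈ I
  bar_mem : ∀ x ∈ I, D.bar x ∈ I

/-- `Ĩ = {x | ȳ μ x ∈ I for all y ∈ J(Δ)}`. -/
def tildeI (Δ : Set (R × R)) (I : Set R) : Set R :=
  {x | ∀ y ∈ JSet Δ, D.bar y * D.mu * x ∈ I}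

/-- `Ω^I_min`, the `∔`-subgroup of `R × R` generated by `{(0, x - x̄λ) | x ∈ I}` and
`{a • c | a ∈ Δ, c ∈ I}`. -/
inductive OmegaMin (Δ : Set (R × R)) (I : Set R) : R × R → Prop
  | base (x : R) (hx : x ∈ I) : OmegaMin Δ I (0, x - D.bar x * D.lam)
  | smul (a : R × R) (ha : a ∈ Δ) (c : R) (hc : c ∈ I) : OmegaMin Δ I (D.hSMul a c)
  | add (a b : R × R) : OmegaMin Δ I a → OmegaMin Δ I b → OmegaMin Δ I (D.hAdd a b)
  | neg (a : R × R) : OmegaMin Δ I a → OmegaMin Δ I (D.hNeg a)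

/-- `Ω^I_min` as a set. -/
def OmegaMinSet (Δ : Set (R × R)) (I : Set R) : Set (R × R) := {p | D.OmegaMin Δ I p}

/-- `Ω^I_max = Δ ∩ (Ĩ × I)`. -/
def OmegaMaxSet (Δ : Set (R × R)) (I : Set R) : Set (R × R) :=
  {p | p ∈ Δ ∧ p.1 ∈ D.tildeI Δ I ∧ p.2 ∈ I}

/-- `Ω` is a relative odd form parameter for `I`. -/
structure IsRelFormParam (Δ : Set (R × R)) (I : Set R) (Ω : Set (R × R)) : Prop where
  add_mem : ∀ a ∈ Ω, ∀ b ∈ Ω, D.hAdd a b ∈ Ω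
  neg_mem : ∀ a ∈ Ω, D.hNeg a ∈ Ω
  smul_mem : ∀ a ∈ Ω, ∀ r : R, D.hSMul a r ∈ Ω
  min_le : D.OmegaMinSet Δ I ⊆ Ω
  le_max : Ω ⊆ D.OmegaMaxSet Δ I

/-- `(I, Ω)` is an odd form ideal of `(R, Δ)`. -/
def IsFormIdeal (Δ : Set (R × R)) (I : Set R) (Ω : Set (R × R)) : Prop :=
  D.IsInvIdeal I ∧ D.IsRelFormParam Δ I Ω

/-- `Ω^{-1} = {(x, y) | (x, ȳ) ∈ Ω}`. -/
def paramInv (Ω : Set (R × R)) : Set (R × R) := {p | (p.1, D.bar p.2) ∈ Ω}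

/-- `Ω^{-ε(i)}`. -/
def paramPow {n : ℕ} (Ω : Set (R × R)) (i : Idx n) : Set (R × R) :=
  if 0 < i.1 then D.paramInv Ω else Ω

/-- The λ-Hermitian form `b`. -/
def bform {n : ℕ} (u v : Idx n → R) : R :=
  (∑ i ∈ posIdx n, D.bar (u i) * v i.neg) + D.bar (u (Idx.zero n)) * D.mu * v (Idx.zero n)
    + ∑ i ∈ posIdx n, D.bar (u i.neg) * D.lam * v i

/-- The quadratic map `q`. -/
def qform {n : ℕ} (u : Idx n → R) : R × R :=
  (u (Idx.zero n), ∑ i ∈ posIdx n, D.bar (u i) * u i.neg)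

/-- The odd-dimensional unitary group `U_{2n+1}(R, Δ)`, as a subset of `GL_{2n+1}(R)`. -/
def unitary (Δ : Set (R × R)) (n : ℕ) : Set (GLn R n) :=
  {σ | (∀ u v : Idx n → R,
          D.bform (Matrix.mulVec σ.val u)
            (Matrix.mulVec σ.val v) = D.bform u v)
      ∧ ∀ u : Idx n → R,
          D.hSub (D.qform (Matrix.mulVec σ.val u)) (D.qform u) ∈ Δ}

/-- The short root matrix `T_{ij}(x)`. -/
def shortRootMat {n : ℕ} (i j : Idx n) (x : R) : Matrix (Idx n) (Idx n) R :=
  1 + Matrix.single i j x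
    - Matrix.single j.neg i.neg
        ((if 0 < j.1 then (1 : R) else D.bar D.lam) * D.bar x *
          (if 0 < i.1 then (1 : R) else D.lam))

/-- The extra short root matrix `T_i(x, y)`. -/
def extraShortRootMat {n : ℕ} (i : Idx n) (x y : R) : Matrix (Idx n) (Idx n) R :=
  1 + Matrix.single (Idx.zero n) i.neg x
    - Matrix.single i (Idx.zero n)
        ((if 0 < i.1 then D.bar D.lam else (1 : R)) * D.bar x * D.mu)
    + Matrix.single i i.neg y

/-- `g` is a short root matrix `T_{ij}(x)`. -/
def IsShortRootElem {n : ℕ} (g : GLn R n) : Prop :=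
  ∃ (i j : Idx n) (x : R), i.1 ≠ 0 ∧ j.1 ≠ 0 ∧ i.1 ≠ j.1 ∧ i.1 ≠ -j.1 ∧
    g.val = D.shortRootMat i j x

/-- `g` is an extra short root matrix `T_i(x, y)` with `(x, y) ∈ Δ^{-ε(i)}`. -/
def IsExtraShortRootElem {n : ℕ} (Δ : Set (R × R)) (g : GLn R n) : Prop :=
  ∃ (i : Idx n) (x y : R), i.1 ≠ 0 ∧ (x, y) ∈ D.paramPow Δ i ∧
    g.val = D.extraShortRootMat i x y

/-- The elementary subgroup `EU_{2n+1}(R, Δ)`. -/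
def elemGroup (Δ : Set (R × R)) (n : ℕ) : Subgroup (GLn R n) :=
  Subgroup.closure {g | D.IsShortRootElem g ∨ D.IsExtraShortRootElem Δ g}

/-- `g` is an `(I, Ω)`-elementary short root matrix. -/
def IsRelShortRootElem {n : ℕ} (I : Set R) (g : GLn R n) : Prop :=
  ∃ (i j : Idx n) (x : R), i.1 ≠ 0 ∧ j.1 ≠ 0 ∧ i.1 ≠ j.1 ∧ i.1 ≠ -j.1 ∧ x ∈ I ∧
    g.val = D.shortRootMat i j x

/-- `g` is an `(I, Ω)`-elementary extra short root matrix. -/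
def IsRelExtraShortRootElem {n : ℕ} (Ω : Set (R × R)) (g : GLn R n) : Prop :=
  ∃ (i : Idx n) (x y : R), i.1 ≠ 0 ∧ (x, y) ∈ D.paramPow Ω i ∧
    g.val = D.extraShortRootMat i x y

/-- The preelementary subgroup `EU_{2n+1}(I, Ω)`. -/
def preElemGroup (I : Set R) (Ω : Set (R × R)) (n : ℕ) : Subgroup (GLn R n) :=
  Subgroup.closure {g | D.IsRelShortRootElem I g ∨ D.IsRelExtraShortRootElem Ω g}

/-- The relative elementary subgroup `EU_{2n+1}((R, Δ), (I, Ω))`,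
the normal closure of `EU_{2n+1}(I, Ω)` in `EU_{2n+1}(R, Δ)`. -/
def elemRelGroup (Δ : Set (R × R)) (I : Set R) (Ω : Set (R × R)) (n : ℕ) : Subgroup (GLn R n) :=
  Subgroup.closure {x | ∃ e ∈ D.elemGroup Δ n, ∃ g ∈ D.preElemGroup I Ω n, x = e * g * e⁻¹}

/-- The principal congruence subgroup `U_{2n+1}((R, Δ), (I, Ω))`. -/
def principalCongruence (Δ : Set (R × R)) (I : Set R) (Ω : Set (R × R)) (n : ℕ) :
    Set (GLn R n) :=
  {σ | σ ∈ D.unitary Δ n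
      ∧ (∀ i j : Idx n, i.1 ≠ 0 → j.1 ≠ 0 →
          σ.val i j - (if i = j then (1 : R) else 0) ∈ I)
      ∧ ∀ u ∈ MRD Δ n,
          D.hSub (D.qform (Matrix.mulVec σ.val u)) (D.qform u) ∈ Ω}

/-- The group `Ũ_{2n+1}((R, Δ), (I, Ω))`. -/
def tildeU (Δ : Set (R × R)) (I : Set R) (Ω : Set (R × R)) (n : ℕ) : Set (GLn R n) :=
  {σ | σ ∈ D.unitary Δ n ∧ ∀ u ∈ MIO I Ω n,
      D.hSub (D.qform (Matrix.mulVec σ.val u)) (D.qform u) ∈ Ω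
      ∧ D.hSub (D.qform (Matrix.mulVec ((σ⁻¹).val) u)) (D.qform u) ∈ Ω}

/-- The full congruence subgroup `CU_{2n+1}((R, Δ), (I, Ω))`. -/
def fullCongruence (Δ : Set (R × R)) (I : Set R) (Ω : Set (R × R)) (n : ℕ) : Set (GLn R n) :=
  {σ | σ ∈ D.tildeU Δ I Ω n ∧ ∀ τ ∈ D.elemGroup Δ n,
      σ * τ * σ⁻¹ * τ⁻¹ ∈ D.principalCongruence Δ I Ω n}

/-- `H` is a subgroup of `U_{2n+1}(R, Δ)`. -/
structure IsSubgroupOfUnitary (Δ : Set (R × R)) (n : ℕ) (H : Set (GLn R n)) : Prop where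
  subset : H ⊆ D.unitary Δ n
  one_mem : (1 : GLn R n) ∈ H
  mul_mem : ∀ a ∈ H, ∀ b ∈ H, a * b ∈ H
  inv_mem : ∀ a ∈ H, a⁻¹ ∈ H

/-- `H` is normalized by the elementary subgroup `EU_{2n+1}(R, Δ)`. -/
def IsENormal (Δ : Set (R × R)) (n : ℕ) (H : Set (GLn R n)) : Prop :=
  ∀ e ∈ D.elemGroup Δ n, ∀ h ∈ H, e * h * e⁻¹ ∈ H

/-- The ideal part of the level of `H`. -/
def levelI {n : ℕ} (H : Set (GLn R n)) : Set R :=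
  {x | ∃ i j : Idx n, i.1 ≠ 0 ∧ j.1 ≠ 0 ∧ i.1 ≠ j.1 ∧ i.1 ≠ -j.1 ∧
      ∃ g ∈ H, g.val = D.shortRootMat i j x}

/-- The form parameter part of the level of `H`. -/
def levelOmega {n : ℕ} (Δ : Set (R × R)) (H : Set (GLn R n)) : Set (R × R) :=
  {p | p ∈ Δ ∧ ∃ i : Idx n, i.1 < 0 ∧
      ∃ g ∈ H, g.val = D.extraShortRootMat i p.1 p.2}

/-- The relative odd form parameter `^σΩ` for `I` defined by `Ω` and `σ`. -/
def transportedParam (Δ : Set (R × R)) (I : Set R) (Ω : Set (R × R)) (n : ℕ) (σ : GLn R n) :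
    Set (R × R) :=
  {p | ∃ x y : R, (x, y) ∈ Ω ∧ ∃ m ∈ D.OmegaMinSet Δ I,
      p = D.hAdd (D.hAdd
            (D.hSMul
              (D.hSub (D.qform (fun i => σ.val i (Idx.zero n)))
                ((1 : R), (0 : R))) x)
            (x, y)) m}

/-- `TEU_{2n+1}(R, Δ)`: upper triangular elementary matrices with ones on the diagonal,
with respect to the index ordering `1, …, n, 0, -n, …, -1`. -/
def upperTriangularElem (Δ : Set (R × R)) (n : ℕ) : Set (GLn R n) :=
  {f | f ∈ D.elemGroup Δ n
      ∧ (∀ i j : Idx n, ordIdx j < ordIdx i → f.val i j = 0)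
      ∧ ∀ i : Idx n, f.val i i = 1}

/-- `UEU_{2n+1}(R, Δ)`: elementary matrices of block form `(A B C; 0 1 D; 0 0 E)`
with respect to the decomposition `Θ₊, {0}, Θ₋`. -/
def blockUpperElem (Δ : Set (R × R)) (n : ℕ) : Set (GLn R n) :=
  {f | f ∈ D.elemGroup Δ n
      ∧ (∀ i j : Idx n, i.1 ≤ 0 → 0 < j.1 → f.val i j = 0)
      ∧ f.val (Idx.zero n) (Idx.zero n) = 1
      ∧ ∀ i : Idx n, i.1 < 0 → f.val i (Idx.zero n) = 0}

/-- `R` is quasifinite: it is the union of a directed family of subrings, each closed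
under the involution, containing `λ` and `μ`, and finitely generated as a module over its
center. -/
def IsQuasifinite : Prop :=
  ∃ S : Set (Subring R), S.Nonempty ∧ DirectedOn (· ≤ ·) S ∧
    (∀ A ∈ S, (∀ x ∈ A, D.bar x ∈ A) ∧ D.lam ∈ A ∧ D.mu ∈ A ∧
      ∃ (m : ℕ) (v : Fin m → R), (∀ k, v k ∈ A) ∧
        ∀ x ∈ A, ∃ c : Fin m → R,
          (∀ k, c k ∈ A ∧ ∀ y ∈ A, c k * y = y * c k) ∧ x = ∑ k, c k * v k) ∧
    ∀ x : R, ∃ A ∈ S, x ∈ A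

end OddFormRingData

/-- The Jacobson radical of a (possibly noncommutative) ring. -/
def jacobsonRadical (R : Type*) [Ring R] : Ideal R := sInf {J : Ideal R | J.IsMaximal}

/-- `R` is semilocal: `R / rad R` is semisimple (hence semisimple Artinian). -/
def IsSemilocalRing (R : Type*) [Ring R] : Prop :=
  IsSemisimpleModule R (R ⧸ jacobsonRadical R)

/-- A bundled (possibly noncommutative) ring. -/
structure BundledRing : Type (u + 1) where
  carrier : Type u
  [str : Ring carrier]

attribute [instance] BundledRing.str

instance : CoeSort BundledRing (Type u) := ⟨BundledRing.carrier⟩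

universe u

/- ### Auxiliary development for statement11 ### -/

namespace OddFormRingData

variable {R : Type*} [Ring R] (D : OddFormRingData R)

section RingFacts

lemma bar_zero : D.bar 0 = 0 := by
  have h := D.bar_add 0 0
  rw [add_zero] at h
  exact add_eq_left.mp h.symm

lemma bar_neg (x : R) : D.bar (-x) = - D.bar x := by
  have h := D.bar_add x (-x)
  rw [add_neg_cancel, D.bar_zero] at h
  exact (neg_eq_of_add_eq_zero_right h.symm).symm

lemma bar_sub (x y : R) : D.bar (x - y) = D.bar x - D.bar y := by
  rw [sub_eq_add_neg, D.bar_add, D.bar_neg, sub_eq_add_neg]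

/-- `bar` as an additive monoid hom. -/
def barHom : R →+ R where
  toFun := D.bar
  map_zero' := D.bar_zero
  map_add' := D.bar_add

@[simp] lemma barHom_apply (x : R) : D.barHom x = D.bar x := rfl

lemma lam_mul_barlam : D.lam * D.bar D.lam = 1 := by
  have h := D.bar_bar 1
  rw [D.bar_one] at h
  rw [D.bar_one, mul_one] at h
  exact h.symm

lemma barlam_mul_lam : D.bar D.lam * D.lam = 1 := by
  have hinj : Function.Injective (fun x : R => D.bar (D.bar x)) :=
    D.bar_bijective.injective.comp D.bar_bijective.injective
  have h2 : D.bar (D.bar 1) = 1 := by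
    rw [D.bar_one]; exact D.bar_one
  have h1 : D.bar (D.bar (D.bar D.lam * D.lam)) = D.bar (D.bar 1) := by
    rw [D.bar_bar, h2, ← mul_assoc]
    calc D.lam * D.bar D.lam * D.lam * D.bar D.lam
        = 1 * D.lam * D.bar D.lam := by rw [D.lam_mul_barlam]
      _ = 1 := by rw [one_mul, D.lam_mul_barlam]
  exact hinj h1

lemma bar_barlam : D.bar (D.bar D.lam) = D.lam := by
  have h := D.bar_bar D.lam
  rw [h, mul_assoc, D.lam_mul_barlam, mul_one]

lemma barbar_mul_lam (x : R) : D.bar (D.bar x) * D.lam = D.lam * x := by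
  rw [D.bar_bar, mul_assoc, mul_assoc, D.barlam_mul_lam, mul_one]

lemma barmu_mul_lam : D.bar D.mu * D.lam = D.mu := D.mu_symm.symm

end RingFacts

section HeisFacts

lemma hAdd_fst (a b : R × R) : (D.hAdd a b).1 = a.1 + b.1 := rfl
lemma hSub_fst (a b : R × R) : (D.hSub a b).1 = a.1 - b.1 := by
  simp [hSub, hAdd, hNeg, sub_eq_add_neg]

lemma hNeg_hNeg (a : R × R) : D.hNeg (D.hNeg a) = a := by
  obtain ⟨a1, a2⟩ := a
  simp only [hNeg, D.bar_neg, Prod.mk.injEq]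
  constructor <;> first | noncomm_ring | abel

lemma hNeg_hSub (a b : R × R) : D.hNeg (D.hSub a b) = D.hSub b a := by
  obtain ⟨a1, a2⟩ := a; obtain ⟨b1, b2⟩ := b
  simp only [hSub, hAdd, hNeg, D.bar_add, D.bar_neg, Prod.mk.injEq]
  constructor <;> first | noncomm_ring | abel

lemma hSub_cocycle (a b c : R × R) :
    D.hSub a c = D.hAdd (D.hSub a b) (D.hSub b c) := by
  obtain ⟨a1, a2⟩ := a; obtain ⟨b1, b2⟩ := b; obtain ⟨c1, c2⟩ := c
  simp only [hSub, hAdd, hNeg, D.bar_add, D.bar_neg, Prod.mk.injEq]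
  constructor <;> first | noncomm_ring | abel

lemma hAdd_zero_zero (a : R × R) (z : R) :
    D.hAdd a (0, z) = (a.1, a.2 + z) := by
  simp [hAdd, D.bar_zero]

lemma zero_hAdd (a : R × R) (z : R) :
    D.hAdd (0, z) a = (a.1, a.2 + z) := by
  obtain ⟨a1, a2⟩ := a
  simp only [hAdd, D.bar_zero, Prod.mk.injEq]
  constructor <;> first | noncomm_ring | abel

/-- The master rearrangement identity for the normality computation. -/
lemma master_identity (A B C E W : R × R) (z₁ z₂ : R) :
    D.hAdd (D.hAdd (D.hSub (D.hAdd (D.hAdd A B) (0, z₁))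
        (D.hAdd (D.hAdd C E) (0, z₂))) W) (D.hSub C A)
      = D.hAdd (D.hAdd
          (D.hAdd (D.hAdd A (D.hSub B E)) (D.hNeg A))
          (D.hAdd (D.hAdd A (D.hAdd (D.hAdd (D.hNeg C) W) C)) (D.hNeg A)))
        ((0 : R), z₁ - z₂) := by
  obtain ⟨A1, A2⟩ := A; obtain ⟨B1, B2⟩ := B; obtain ⟨C1, C2⟩ := C
  obtain ⟨E1, E2⟩ := E; obtain ⟨W1, W2⟩ := W
  simp only [hSub, hAdd, hNeg, D.bar_add, D.bar_neg, D.bar_zero, Prod.mk.injEq]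
  constructor <;> first | noncomm_ring | abel

/-- Conjugation formula. -/
lemma conj_formula (a w : R × R) :
    D.hAdd (D.hAdd a w) (D.hNeg a)
      = (w.1, w.2 + (D.bar w.1 * D.mu * a.1 - D.bar a.1 * D.mu * w.1)) := by
  obtain ⟨a1, a2⟩ := a; obtain ⟨w1, w2⟩ := w
  simp only [hSub, hAdd, hNeg, D.bar_add, D.bar_neg, Prod.mk.injEq]
  constructor <;> first | noncomm_ring | abel

end HeisFacts

end OddFormRingData


namespace Idx

variable {n : ℕ}

@[simp] lemma neg_val (i : Idx n) : (i.neg).1 = -i.1 := rfl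

@[simp] lemma zero_val : (Idx.zero n).1 = 0 := rfl

@[simp] lemma neg_neg (i : Idx n) : i.neg.neg = i := Subtype.ext (by simp [Idx.neg])

lemma eq_iff {i j : Idx n} : i = j ↔ i.1 = j.1 := Subtype.ext_iff

end Idx

lemma mem_posIdx {n : ℕ} {i : Idx n} : i ∈ posIdx n ↔ 0 < i.1 := by
  simp [posIdx]

/-- The `j`-th standard basis vector. -/
def ev {R : Type*} [Ring R] {n : ℕ} (j : Idx n) : Idx n → R := Pi.single j 1

lemma ev_same {R : Type*} [Ring R] {n : ℕ} (j : Idx n) : (ev j : Idx n → R) j = 1 :=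
  Pi.single_eq_same j 1

lemma ev_ne {R : Type*} [Ring R] {n : ℕ} {j k : Idx n} (h : k ≠ j) :
    (ev j : Idx n → R) k = 0 := Pi.single_eq_of_ne h 1

lemma ev_zero_apply {R : Type*} [Ring R] {n : ℕ} {j : Idx n} (h : j.1 ≠ 0) :
    (ev j : Idx n → R) (Idx.zero n) = 0 :=
  ev_ne (fun hc => h (by rw [Idx.eq_iff] at hc; simpa using hc.symm))

lemma mulVec_ev {R : Type*} [Ring R] {n : ℕ} (A : Matrix (Idx n) (Idx n) R) (j : Idx n) :
    Matrix.mulVec A (ev j) = fun i => A i j := by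
  rw [ev, Matrix.mulVec_single_one]
  rfl

lemma mulVec_ev_apply {R : Type*} [Ring R] {n : ℕ} (A : Matrix (Idx n) (Idx n) R) (j i : Idx n) :
    Matrix.mulVec A (ev j) i = A i j := by
  rw [mulVec_ev]

namespace OddFormRingData

variable {R : Type*} [Ring R] (D : OddFormRingData R)

section Vectors

variable {n : ℕ}

/-- The polarization term of the quadratic form. -/
def zf (u v : Idx n → R) : R :=
  (∑ i ∈ posIdx n, (D.bar (u i) * v i.neg + D.bar (v i) * u i.neg))
    + D.bar (u (Idx.zero n)) * D.mu * v (Idx.zero n)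

/-- The correction term. -/
def wf (u v : Idx n → R) : R := ∑ i ∈ posIdx n, D.bar (v i) * u i.neg

lemma qform_fst (u : Idx n → R) : (D.qform u).1 = u (Idx.zero n) := rfl

lemma qform_add (u v : Idx n → R) :
    D.qform (u + v) = D.hAdd (D.hAdd (D.qform u) (D.qform v)) ((0 : R), D.zf u v) := by
  simp only [qform, hAdd, zf, Pi.add_apply, D.bar_add, D.bar_zero, add_mul, mul_add,
    Finset.sum_add_distrib, mul_zero, Prod.mk.injEq]
  constructor <;> abel

lemma bar_wf_mul_lam (u v : Idx n → R) :
    D.bar (D.wf u v) * D.lam = ∑ i ∈ posIdx n, D.bar (u i.neg) * D.lam * v i := by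
  rw [wf, ← D.barHom_apply, map_sum, Finset.sum_mul]
  refine Finset.sum_congr rfl fun i _ => ?_
  rw [D.barHom_apply, D.bar_mul, mul_assoc, D.barbar_mul_lam, ← mul_assoc]

lemma zf_eq_bform (u v : Idx n → R) :
    D.zf u v = D.bform u v + (D.wf u v - D.bar (D.wf u v) * D.lam) := by
  rw [zf, bform, D.bar_wf_mul_lam, wf, Finset.sum_add_distrib]
  abel

end Vectors

section SingleVec

variable {n : ℕ}

lemma bform_ev_neg (x : Idx n → R) {j : Idx n} (hj : j.1 < 0) :
    D.bform x (ev j) = D.bar (x j.neg) := by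
  rw [bform]
  have h2 : (ev j : Idx n → R) (Idx.zero n) = 0 := ev_zero_apply (by omega)
  have h1 : (∑ i ∈ posIdx n, D.bar (x i) * (ev j : Idx n → R) i.neg)
      = D.bar (x j.neg) := by
    rw [Finset.sum_eq_single j.neg]
    · rw [Idx.neg_neg, ev_same, mul_one]
    · intro b _ hb
      rw [ev_ne (fun hc => hb (by have := congrArg Idx.neg hc; rwa [Idx.neg_neg] at this)),
        mul_zero]
    · intro hc
      exact absurd (mem_posIdx.mpr (by rw [Idx.neg_val]; omega)) hc
  have h3 : (∑ i ∈ posIdx n, D.bar (x i.neg) * D.lam * (ev j : Idx n → R) i) = 0 :=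
    Finset.sum_eq_zero fun i hi => by
      rw [ev_ne (fun hc => by have := mem_posIdx.mp hi; rw [Idx.eq_iff] at hc; omega), mul_zero]
  rw [h1, h2, h3, mul_zero, add_zero, add_zero]

lemma bform_ev_pos (x : Idx n → R) {j : Idx n} (hj : 0 < j.1) :
    D.bform x (ev j) = D.bar (x j.neg) * D.lam := by
  rw [bform]
  have h2 : (ev j : Idx n → R) (Idx.zero n) = 0 := ev_zero_apply (by omega)
  have h1 : (∑ i ∈ posIdx n, D.bar (x i) * (ev j : Idx n → R) i.neg) = 0 :=
    Finset.sum_eq_zero fun i hi => by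
      rw [ev_ne (fun hc => by
        have := mem_posIdx.mp hi; rw [Idx.eq_iff, Idx.neg_val] at hc; omega), mul_zero]
  have h3 : (∑ i ∈ posIdx n, D.bar (x i.neg) * D.lam * (ev j : Idx n → R) i)
      = D.bar (x j.neg) * D.lam := by
    rw [Finset.sum_eq_single j]
    · rw [ev_same, mul_one]
    · intro b _ hb
      rw [ev_ne hb, mul_zero]
    · intro hc
      exact absurd (mem_posIdx.mpr hj) hc
  rw [h1, h2, h3, mul_zero, add_zero, zero_add]

lemma bform_ev_zero_left (w : Idx n → R) :
    D.bform (ev (Idx.zero n)) w = D.mu * w (Idx.zero n) := by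
  rw [bform]
  have h1 : (∑ i ∈ posIdx n, D.bar ((ev (Idx.zero n) : Idx n → R) i) * w i.neg) = 0 :=
    Finset.sum_eq_zero fun i hi => by
      rw [ev_ne (fun hc => by
        have := mem_posIdx.mp hi; rw [Idx.eq_iff] at hc; simp at hc; omega),
        D.bar_zero, zero_mul]
  have h3 : (∑ i ∈ posIdx n, D.bar ((ev (Idx.zero n) : Idx n → R) i.neg) * D.lam * w i) = 0 :=
    Finset.sum_eq_zero fun i hi => by
      rw [ev_ne (fun hc => by
        have := mem_posIdx.mp hi; rw [Idx.eq_iff, Idx.neg_val] at hc; simp at hc; omega),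
        D.bar_zero, zero_mul, zero_mul]
  rw [h1, h3, ev_same, D.bar_one, one_mul, zero_add, add_zero]

end SingleVec

end OddFormRingData

section MulVecFacts

variable {R : Type*} [Ring R] {n : ℕ}

lemma mulVec_inv_cancel (σ : GLn R n) (w : Idx n → R) :
    Matrix.mulVec σ.val (Matrix.mulVec (σ⁻¹).val w) = w := by
  rw [Matrix.mulVec_mulVec, show σ.val * (σ⁻¹).val = 1 by
    rw [← Units.val_mul, mul_inv_cancel, Units.val_one], Matrix.one_mulVec]

lemma inv_mulVec_cancel (σ : GLn R n) (w : Idx n → R) :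
    Matrix.mulVec (σ⁻¹).val (Matrix.mulVec σ.val w) = w := by
  rw [Matrix.mulVec_mulVec, show (σ⁻¹).val * σ.val = 1 by
    rw [← Units.val_mul, inv_mul_cancel, Units.val_one], Matrix.one_mulVec]

end MulVecFacts

namespace Idx
lemma ne_zero_iff {n : ℕ} {k : Idx n} : k ≠ Idx.zero n ↔ k.1 ≠ 0 := by
  rw [not_iff_not, Idx.eq_iff, Idx.zero_val]
end Idx

lemma fst_mem_JSet {R : Type*} {S : Set (R × R)} {p : R × R} (h : p ∈ S) : p.1 ∈ JSet S :=
  ⟨p.2, by rwa [Prod.mk.eta]⟩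

namespace OddFormRingData

variable {R : Type*} [Ring R] (D : OddFormRingData R)
variable {n : ℕ} {Δ : Set (R × R)} {I : Set R} {Ω : Set (R × R)}

lemma bar_barmul_lam (x y : R) :
    D.bar (D.bar x * D.mu * y) * D.lam = D.bar y * D.mu * x := by
  rw [D.bar_mul, D.bar_mul, mul_assoc, mul_assoc, D.barbar_mul_lam,
    ← mul_assoc (D.bar D.mu), D.barmu_mul_lam, ← mul_assoc]

lemma mem_of_bar_mem (hI : D.IsInvIdeal I) {x : R} (h : D.bar x ∈ I) : x ∈ I := by
  have h2 : D.bar (D.bar x) ∈ I := hI.bar_mem _ h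
  have h3 : D.bar D.lam * D.bar (D.bar x) * D.lam ∈ I :=
    hI.mul_right _ _ (hI.mul_left _ _ h2)
  have e : D.bar D.lam * D.bar (D.bar x) * D.lam = x := by
    rw [D.bar_bar, mul_assoc D.lam x, ← mul_assoc (D.bar D.lam), D.barlam_mul_lam,
      one_mul, mul_assoc, D.barlam_mul_lam, mul_one]
  rwa [e] at h3

lemma sum_mem_I (hI : D.IsInvIdeal I) {α : Type*} (s : Finset α) (f : α → R)
    (h : ∀ a ∈ s, f a ∈ I) : (∑ a ∈ s, f a) ∈ I :=
  Finset.sum_induction f (· ∈ I) (fun a b ha hb => hI.add_mem a ha b hb) hI.zero_mem h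

section Params

lemma pair_zero_mem_Delta (hΔ : D.IsFormParam Δ) : ((0 : R), (0 : R)) ∈ Δ := by
  have h : ((0 : R), (0 : R) - D.bar 0 * D.lam) ∈ D.DeltaMin := ⟨0, rfl⟩
  have h2 := hΔ.min_le h
  rwa [D.bar_zero, zero_mul, sub_zero] at h2

lemma jdelta_zero (hΔ : D.IsFormParam Δ) : (0 : R) ∈ JSet Δ := fst_mem_JSet (D.pair_zero_mem_Delta hΔ)

lemma jdelta_add (hΔ : D.IsFormParam Δ) {x y : R} (hx : x ∈ JSet Δ) (hy : y ∈ JSet Δ) : x + y ∈ JSet Δ := by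
  obtain ⟨z1, h1⟩ := hx; obtain ⟨z2, h2⟩ := hy
  exact ⟨_, hΔ.add_mem _ h1 _ h2⟩

lemma jdelta_neg (hΔ : D.IsFormParam Δ) {x : R} (hx : x ∈ JSet Δ) : -x ∈ JSet Δ := by
  obtain ⟨z1, h1⟩ := hx
  exact ⟨_, hΔ.neg_mem _ h1⟩

lemma jdelta_sub (hΔ : D.IsFormParam Δ) {x y : R} (hx : x ∈ JSet Δ) (hy : y ∈ JSet Δ) : x - y ∈ JSet Δ := by
  rw [sub_eq_add_neg]
  exact D.jdelta_add hΔ hx (D.jdelta_neg hΔ hy)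

lemma omegaMin_mem (hIΩ : D.IsFormIdeal Δ I Ω) {c : R} (hc : c ∈ I) : ((0 : R), c - D.bar c * D.lam) ∈ Ω :=
  hIΩ.2.min_le (OmegaMin.base c hc)

lemma jomega_zero (hIΩ : D.IsFormIdeal Δ I Ω) : (0 : R) ∈ JSet Ω := ⟨_, D.omegaMin_mem hIΩ hIΩ.1.zero_mem⟩

lemma omega_subset_delta (hIΩ : D.IsFormIdeal Δ I Ω) : Ω ⊆ Δ := fun _ hp => (hIΩ.2.le_max hp).1

lemma jomega_subset_jdelta (hIΩ : D.IsFormIdeal Δ I Ω) : JSet Ω ⊆ JSet Δ := fun _ ⟨z, hz⟩ =>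
  ⟨z, D.omega_subset_delta hIΩ hz⟩

lemma omega_snd_mem (hIΩ : D.IsFormIdeal Δ I Ω) {p : R × R} (hp : p ∈ Ω) : p.2 ∈ I := (hIΩ.2.le_max hp).2.2

lemma jomega_tildeI (hIΩ : D.IsFormIdeal Δ I Ω) {s : R} (hs : s ∈ JSet Ω) : s ∈ D.tildeI Δ I := by
  obtain ⟨t, ht⟩ := hs
  exact (hIΩ.2.le_max ht).2.1

lemma bar_mu_mem_left (hIΩ : D.IsFormIdeal Δ I Ω) {y s : R} (hy : y ∈ JSet Δ) (hs : s ∈ JSet Ω) :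
    D.bar y * D.mu * s ∈ I := D.jomega_tildeI hIΩ hs y hy

lemma bar_mu_mem_right (hIΩ : D.IsFormIdeal Δ I Ω) {s y : R} (hs : s ∈ JSet Ω) (hy : y ∈ JSet Δ) :
    D.bar s * D.mu * y ∈ I := by
  have h1 : D.bar y * D.mu * s ∈ I := D.bar_mu_mem_left hIΩ hy hs
  have h2 := hIΩ.1.mul_right D.lam _ (hIΩ.1.bar_mem _ h1)
  rwa [D.bar_barmul_lam] at h2

/-- Conjugation of an element of `Ω` by an element whose first coordinate is in `J(Δ)`. -/
lemma conj_mem (hIΩ : D.IsFormIdeal Δ I Ω) {a w : R × R} (hw : w ∈ Ω) (ha : a.1 ∈ JSet Δ) :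
    D.hAdd (D.hAdd a w) (D.hNeg a) ∈ Ω := by
  rw [D.conj_formula]
  have hc : D.bar w.1 * D.mu * a.1 ∈ I :=
    D.bar_mu_mem_right hIΩ (fst_mem_JSet hw) ha
  have hη : ((0 : R), D.bar w.1 * D.mu * a.1 - D.bar a.1 * D.mu * w.1) ∈ Ω := by
    have he := D.bar_barmul_lam w.1 a.1
    have := D.omegaMin_mem hIΩ hc
    rwa [he] at this
  have h2 := hIΩ.2.add_mem _ hw _ hη
  rwa [D.hAdd_zero_zero] at h2

end Params

section Unitary

variable {σ : GLn R n}

lemma mulVec_zero_mem (hΔ : D.IsFormParam Δ) (hσ : σ ∈ D.unitary Δ n) {u : Idx n → R}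
    (hu : u (Idx.zero n) ∈ JSet Δ) :
    (Matrix.mulVec σ.val u) (Idx.zero n) ∈ JSet Δ := by
  have h := fst_mem_JSet (hσ.2 u)
  simp only [D.hSub_fst, D.qform_fst] at h
  have h2 := D.jdelta_add hΔ h hu
  rwa [sub_add_cancel] at h2

lemma inv_mulVec_zero_mem (hΔ : D.IsFormParam Δ) (hσ : σ ∈ D.unitary Δ n) {u : Idx n → R}
    (hu : u (Idx.zero n) ∈ JSet Δ) :
    (Matrix.mulVec (σ⁻¹).val u) (Idx.zero n) ∈ JSet Δ := by
  have h := fst_mem_JSet (hσ.2 (Matrix.mulVec (σ⁻¹).val u))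
  simp only [D.hSub_fst, D.qform_fst, mulVec_inv_cancel] at h
  have h2 := D.jdelta_sub hΔ hu h
  rwa [sub_sub_cancel] at h2

/-- Positive case of the `b`-duality between column `0` of `σ` and row `0` of `σ⁻¹`. -/
lemma bar_entry_pos (hσ : σ ∈ D.unitary Δ n) {i : Idx n} (hi : 0 < i.1) :
    D.bar (σ.val i (Idx.zero n)) = D.mu * (σ⁻¹).val (Idx.zero n) i.neg := by
  have h := hσ.1 (ev (Idx.zero n)) (Matrix.mulVec (σ⁻¹).val (ev i.neg))
  rw [mulVec_inv_cancel, D.bform_ev_neg _ (by rw [Idx.neg_val]; omega),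
    D.bform_ev_zero_left, Idx.neg_neg, mulVec_ev_apply, mulVec_ev_apply] at h
  exact h

/-- Negative case of the `b`-duality. -/
lemma bar_entry_neg (hσ : σ ∈ D.unitary Δ n) {i : Idx n} (hi : i.1 < 0) :
    D.bar (σ.val i (Idx.zero n)) * D.lam = D.mu * (σ⁻¹).val (Idx.zero n) i.neg := by
  have h := hσ.1 (ev (Idx.zero n)) (Matrix.mulVec (σ⁻¹).val (ev i.neg))
  rw [mulVec_inv_cancel, D.bform_ev_pos _ (by rw [Idx.neg_val]; omega),
    D.bform_ev_zero_left, Idx.neg_neg, mulVec_ev_apply, mulVec_ev_apply] at h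
  exact h

/-- Row-0 entries of `σ⁻¹` lie in `J(Δ)` for hyperbolic column indices. -/
lemma inv_row_entry_mem (hΔ : D.IsFormParam Δ) (hσ : σ ∈ D.unitary Δ n) {j : Idx n} (hj : j.1 ≠ 0) :
    (σ⁻¹).val (Idx.zero n) j ∈ JSet Δ := by
  have h := D.inv_mulVec_zero_mem hΔ hσ (u := ev j)
    (by rw [ev_zero_apply hj]; exact D.jdelta_zero hΔ)
  rwa [mulVec_ev_apply] at h

/-- If `bar s * μ * (σ⁻¹)_{0, -i} ∈ I` then `σ_{i0} * s ∈ I`. -/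
lemma entry_zero_mul_mem (hI : D.IsInvIdeal I) (hσ : σ ∈ D.unitary Δ n) {i : Idx n}
    (hi : i.1 ≠ 0) {s : R}
    (hs : D.bar s * D.mu * ((σ⁻¹).val (Idx.zero n) i.neg) ∈ I) :
    σ.val i (Idx.zero n) * s ∈ I := by
  rcases hi.lt_or_gt with hneg | hpos
  · have he := D.bar_entry_neg hσ hneg
    have he2 : D.bar (σ.val i (Idx.zero n))
        = D.mu * (σ⁻¹).val (Idx.zero n) i.neg * D.bar D.lam := by
      rw [← he, mul_assoc, D.lam_mul_barlam, mul_one]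
    refine D.mem_of_bar_mem hI ?_
    have : D.bar (σ.val i (Idx.zero n) * s)
        = D.bar s * D.mu * ((σ⁻¹).val (Idx.zero n) i.neg) * D.bar D.lam := by
      rw [D.bar_mul, he2, ← mul_assoc, ← mul_assoc]
    rw [this]
    exact hI.mul_right _ _ hs
  · have he := D.bar_entry_pos hσ hpos
    refine D.mem_of_bar_mem hI ?_
    have : D.bar (σ.val i (Idx.zero n) * s)
        = D.bar s * D.mu * ((σ⁻¹).val (Idx.zero n) i.neg) := by
      rw [D.bar_mul, he, ← mul_assoc]
    rw [this]
    exact hs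

end Unitary

end OddFormRingData

lemma sum_neg_reindex {M : Type*} [AddCommMonoid M] {n : ℕ} (f : Idx n → M) :
    ∑ j ∈ Finset.univ.filter (fun j : Idx n => j.1 < 0), f j
      = ∑ i ∈ posIdx n, f i.neg := by
  refine Finset.sum_nbij' (i := fun j => Idx.neg j) (j := fun i => Idx.neg i)
    ?_ ?_ ?_ ?_ ?_
  · intro a ha
    rw [mem_posIdx, Idx.neg_val]
    have := (Finset.mem_filter.mp ha).2
    omega
  · intro a ha
    rw [Finset.mem_filter]
    refine ⟨Finset.mem_univ _, ?_⟩
    rw [Idx.neg_val]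
    have := mem_posIdx.mp ha
    omega
  · intro a _; exact Idx.neg_neg a
  · intro a _; exact Idx.neg_neg a
  · intro a _; rw [Idx.neg_neg]

lemma mulVec_apply_sum {R : Type*} [Ring R] {n : ℕ} (A : Matrix (Idx n) (Idx n) R)
    (v : Idx n → R) (j : Idx n) :
    Matrix.mulVec A v j = ∑ k, A j k * v k := rfl

namespace OddFormRingData

variable {R : Type*} [Ring R] (D : OddFormRingData R)
variable {n : ℕ} {Δ : Set (R × R)} {I : Set R} {Ω : Set (R × R)}

lemma sub_mem_I (hI : D.IsInvIdeal I) {x y : R} (hx : x ∈ I) (hy : y ∈ I) :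
    x - y ∈ I := by
  rw [sub_eq_add_neg]
  exact hI.add_mem _ hx _ (hI.neg_mem _ hy)

section PCS

variable {τ : GLn R n}

lemma pcs_inv_qd_mem (hΔ : D.IsFormParam Δ) (hIΩ : D.IsFormIdeal Δ I Ω)
    (hτ : τ ∈ D.principalCongruence Δ I Ω n) {w : Idx n → R} (hw : w ∈ MRD Δ n) :
    D.hSub (D.qform (Matrix.mulVec (τ⁻¹).val w)) (D.qform w) ∈ Ω := by
  have hw' : Matrix.mulVec (τ⁻¹).val w ∈ MRD Δ n :=
    D.inv_mulVec_zero_mem hΔ hτ.1 hw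
  have h := hτ.2.2 _ hw'
  rw [mulVec_inv_cancel] at h
  have h2 := hIΩ.2.neg_mem _ h
  rwa [D.hNeg_hSub] at h2

lemma pcs_inv_row_mem (hΔ : D.IsFormParam Δ) (hIΩ : D.IsFormIdeal Δ I Ω)
    (hτ : τ ∈ D.principalCongruence Δ I Ω n) {j : Idx n} (hj : j.1 ≠ 0) :
    (τ⁻¹).val (Idx.zero n) j ∈ JSet Ω := by
  have hm : (ev j : Idx n → R) ∈ MRD Δ n := by
    show (ev j : Idx n → R) (Idx.zero n) ∈ JSet Δ
    rw [ev_zero_apply hj]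
    exact D.jdelta_zero hΔ
  have h := fst_mem_JSet (D.pcs_inv_qd_mem hΔ hIΩ hτ hm)
  simp only [D.hSub_fst, D.qform_fst] at h
  rwa [mulVec_ev_apply, ev_zero_apply hj, sub_zero] at h

lemma pcs_colmul_mem (hΔ : D.IsFormParam Δ) (hIΩ : D.IsFormIdeal Δ I Ω)
    (hτ : τ ∈ D.principalCongruence Δ I Ω n) {i : Idx n} (hi : i.1 ≠ 0)
    {a : R} (ha : a ∈ JSet Δ) :
    τ.val i (Idx.zero n) * a ∈ I := by
  refine D.entry_zero_mul_mem hIΩ.1 hτ.1 hi ?_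
  have hr : (τ⁻¹).val (Idx.zero n) i.neg ∈ JSet Ω :=
    D.pcs_inv_row_mem hΔ hIΩ hτ (by rw [Idx.neg_val]; omega)
  exact D.jomega_tildeI hIΩ hr a ha

lemma defect_mem_MIO (hΔ : D.IsFormParam Δ) (hIΩ : D.IsFormIdeal Δ I Ω)
    (hτ : τ ∈ D.principalCongruence Δ I Ω n) {v : Idx n → R} (hv : v ∈ MRD Δ n) :
    Matrix.mulVec τ.val v - v ∈ MIO I Ω n := by
  constructor
  · intro j hj
    have hone : Matrix.mulVec (τ.val - 1) v = Matrix.mulVec τ.val v - v := by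
      rw [Matrix.sub_mulVec, Matrix.one_mulVec]
    have hd : (Matrix.mulVec τ.val v - v) j = ∑ k, (τ.val - 1) j k * v k := by
      rw [← hone, mulVec_apply_sum]
    rw [hd, ← Finset.sum_erase_add _ _ (Finset.mem_univ (Idx.zero n))]
    refine hIΩ.1.add_mem _ (D.sum_mem_I hIΩ.1 _ _ fun k hk => ?_) _ ?_
    · have hk0 : k.1 ≠ 0 := Idx.ne_zero_iff.mp (Finset.mem_erase.mp hk).1
      have he : (τ.val - 1) j k ∈ I := by
        rw [Matrix.sub_apply, Matrix.one_apply]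
        exact hτ.2.1 j k hj hk0
      exact hIΩ.1.mul_right _ _ he
    · have h1 : (τ.val - 1) j (Idx.zero n) = τ.val j (Idx.zero n) := by
        rw [Matrix.sub_apply, Matrix.one_apply_ne (Idx.ne_zero_iff.mpr hj), sub_zero]
      rw [h1]
      exact D.pcs_colmul_mem hΔ hIΩ hτ hj hv
  · have h := fst_mem_JSet (hτ.2.2 v hv)
    simp only [D.hSub_fst, D.qform_fst] at h
    simpa using h

end PCS

end OddFormRingData

/-- The principal congruence subgroup `U_{2n+1}((R, Δ), (I, Ω))` is a normal subgroup of
`Ũ_{2n+1}((R, Δ), (I, Ω))`. -/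
theorem statement11 {R : Type*} [Ring R] [Nontrivial R] (D : OddFormRingData R)
    (Δ : Set (R × R)) (hΔ : D.IsFormParam Δ) (n : ℕ)
    (I : Set R) (Ω : Set (R × R)) (hIΩ : D.IsFormIdeal Δ I Ω) :
    D.principalCongruence Δ I Ω n ⊆ D.tildeU Δ I Ω n ∧
    ∀ σ ∈ D.tildeU Δ I Ω n, ∀ τ ∈ D.principalCongruence Δ I Ω n,
      σ * τ * σ⁻¹ ∈ D.principalCongruence Δ I Ω n := by
  constructor
  · -- Part 1: principal congruence subgroup is contained in Ũ
    intro σ hσ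
    refine ⟨hσ.1, fun u hu => ?_⟩
    have hu' : u ∈ MRD Δ n := D.jomega_subset_jdelta hIΩ hu.2
    exact ⟨hσ.2.2 u hu', D.pcs_inv_qd_mem hΔ hIΩ hσ hu'⟩
  · -- Part 2: normality
    intro σ hσ τ hτ
    have hσU : σ ∈ D.unitary Δ n := hσ.1
    have hτU : τ ∈ D.unitary Δ n := hτ.1
    have hGamma : ∀ x : Idx n → R, Matrix.mulVec (σ * τ * σ⁻¹).val x
        = Matrix.mulVec σ.val (Matrix.mulVec τ.val (Matrix.mulVec (σ⁻¹).val x)) := by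
      intro x
      rw [Units.val_mul, Units.val_mul, ← Matrix.mulVec_mulVec, ← Matrix.mulVec_mulVec]
    have hUinv_q : ∀ x : Idx n → R,
        D.hSub (D.qform (Matrix.mulVec (σ⁻¹).val x)) (D.qform x) ∈ Δ := by
      intro x
      have h := hσU.2 (Matrix.mulVec (σ⁻¹).val x)
      rw [mulVec_inv_cancel] at h
      have h2 := hΔ.neg_mem _ h
      rwa [D.hNeg_hSub] at h2
    have hUinv_b : ∀ x y : Idx n → R,
        D.bform (Matrix.mulVec (σ⁻¹).val x) (Matrix.mulVec (σ⁻¹).val y) = D.bform x y := by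
      intro x y
      have h := hσU.1 (Matrix.mulVec (σ⁻¹).val x) (Matrix.mulVec (σ⁻¹).val y)
      rw [mulVec_inv_cancel, mulVec_inv_cancel] at h
      exact h.symm
    have hU : (σ * τ * σ⁻¹) ∈ D.unitary Δ n := by
      constructor
      · intro x y
        rw [hGamma, hGamma, hσU.1, hτU.1, hUinv_b]
      · intro x
        rw [hGamma, D.hSub_cocycle
          (D.qform (Matrix.mulVec σ.val (Matrix.mulVec τ.val (Matrix.mulVec (σ⁻¹).val x))))
          (D.qform (Matrix.mulVec τ.val (Matrix.mulVec (σ⁻¹).val x))) (D.qform x)]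
        refine hΔ.add_mem _ (hσU.2 _) _ ?_
        rw [D.hSub_cocycle (D.qform (Matrix.mulVec τ.val (Matrix.mulVec (σ⁻¹).val x)))
          (D.qform (Matrix.mulVec (σ⁻¹).val x)) (D.qform x)]
        exact hΔ.add_mem _ (hτU.2 _) _ (hUinv_q x)
    refine ⟨hU, ?_, ?_⟩
    · -- entry condition
      intro i j hi hj
      have hvj : Matrix.mulVec (σ⁻¹).val (ev j) ∈ MRD Δ n := by
        show Matrix.mulVec (σ⁻¹).val (ev j) (Idx.zero n) ∈ JSet Δ
        refine D.inv_mulVec_zero_mem hΔ hσU ?_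
        rw [ev_zero_apply hj]
        exact D.jdelta_zero hΔ
      have hdj : Matrix.mulVec τ.val (Matrix.mulVec (σ⁻¹).val (ev j))
          - Matrix.mulVec (σ⁻¹).val (ev j) ∈ MIO I Ω n :=
        D.defect_mem_MIO hΔ hIΩ hτ hvj
      set dj := Matrix.mulVec τ.val (Matrix.mulVec (σ⁻¹).val (ev j))
          - Matrix.mulVec (σ⁻¹).val (ev j) with hdjdef
      have hkey : (σ * τ * σ⁻¹).val i j - (if i = j then 1 else 0)
          = Matrix.mulVec σ.val dj i := by
        have h1 : Matrix.mulVec (σ * τ * σ⁻¹).val (ev j)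
            = ev j + Matrix.mulVec σ.val dj := by
          rw [hGamma, show Matrix.mulVec τ.val (Matrix.mulVec (σ⁻¹).val (ev j))
              = Matrix.mulVec (σ⁻¹).val (ev j) + dj by rw [hdjdef]; abel,
            Matrix.mulVec_add, mulVec_inv_cancel]
        have h2 := congrFun h1 i
        rw [mulVec_ev_apply, Pi.add_apply] at h2
        rw [h2, show (ev j : Idx n → R) i = if i = j then 1 else 0 from Pi.single_apply j 1 i]
        abel
      rw [hkey, mulVec_apply_sum, ← Finset.sum_erase_add _ _ (Finset.mem_univ (Idx.zero n))]
      refine hIΩ.1.add_mem _ (D.sum_mem_I hIΩ.1 _ _ fun k hk =>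
        hIΩ.1.mul_left _ _ (hdj.1 k (Idx.ne_zero_iff.mp (Finset.mem_erase.mp hk).1))) _ ?_
      exact D.entry_zero_mul_mem hIΩ.1 hσU hi
        (D.bar_mu_mem_right hIΩ hdj.2
          (D.inv_row_entry_mem hΔ hσU (j := i.neg) (by rw [Idx.neg_val]; omega)))
    · -- q-condition
      intro u hu
      have hv : Matrix.mulVec (σ⁻¹).val u ∈ MRD Δ n := by
        show Matrix.mulVec (σ⁻¹).val u (Idx.zero n) ∈ JSet Δ
        exact D.inv_mulVec_zero_mem hΔ hσU hu
      set v := Matrix.mulVec (σ⁻¹).val u with hvdef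
      have hd : Matrix.mulVec τ.val v - v ∈ MIO I Ω n := D.defect_mem_MIO hΔ hIΩ hτ hv
      set d := Matrix.mulVec τ.val v - v with hddef
      have hveq : Matrix.mulVec τ.val v = v + d := by rw [hddef]; abel
      set G := Matrix.mulVec σ.val d with hGdef
      have hGu : Matrix.mulVec (σ * τ * σ⁻¹).val u = u + G := by
        rw [hGamma, ← hvdef, hveq, Matrix.mulVec_add, ← hGdef, hvdef, mulVec_inv_cancel]
      rw [hGu]
      have hW : D.hSub (D.qform (v + d)) (D.qform v) ∈ Ω := by
        have h := hτ.2.2 v hv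
        rwa [hveq] at h
      have hcoc : D.hSub (D.qform (u + G)) (D.qform u)
          = D.hAdd (D.hAdd (D.hSub (D.qform (u + G)) (D.qform (v + d)))
              (D.hSub (D.qform (v + d)) (D.qform v))) (D.hSub (D.qform v) (D.qform u)) := by
        rw [← D.hSub_cocycle, ← D.hSub_cocycle]
      rw [hcoc, D.qform_add u G, D.qform_add v d, D.master_identity]
      have halpha : D.hSub (D.qform G) (D.qform d) ∈ Ω := by
        rw [hGdef]
        exact (hσ.2 d hd).1
      have hqufst : (D.qform u).1 ∈ JSet Δ := by rw [D.qform_fst]; exact hu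
      refine hIΩ.2.add_mem _ (hIΩ.2.add_mem _ ?_ _ ?_) _ ?_
      · exact D.conj_mem hIΩ halpha hqufst
      · refine D.conj_mem hIΩ ?_ hqufst
        have hWmem : D.hSub (D.hAdd (D.hAdd (D.qform v) (D.qform d)) ((0 : R), D.zf v d))
            (D.qform v) ∈ Ω := by
          have h := hW
          rwa [D.qform_add v d] at h
        have hfst : (D.hNeg (D.qform v)).1 ∈ JSet Δ := by
          have he : (D.hNeg (D.qform v)).1 = -(D.qform v).1 := rfl
          rw [he, D.qform_fst]
          exact D.jdelta_neg hΔ hv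
        have hinner := D.conj_mem hIΩ hWmem hfst
        rwa [D.hNeg_hNeg] at hinner
      · -- central part
        have hbeq : D.bform u G = D.bform v d := by
          have h := hσU.1 v d
          rw [← hGdef] at h
          rw [hvdef, mulVec_inv_cancel] at h
          exact h
        have hwfvd : D.wf v d ∈ I := D.sum_mem_I hIΩ.1 _ _ fun i hi =>
          hIΩ.1.mul_right _ _ (hIΩ.1.bar_mem _
            (hd.1 i (by have := mem_posIdx.mp hi; omega)))
        have hN : (∑ i ∈ posIdx n, (σ⁻¹).val (Idx.zero n) i.neg * u i.neg) ∈ JSet Δ := by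
          have h0 : (fun j : Idx n => if j.1 < 0 then u j else 0) (Idx.zero n) = 0 := by
            simp
          have h1 : Matrix.mulVec (σ⁻¹).val (fun j : Idx n => if j.1 < 0 then u j else 0)
              (Idx.zero n) = ∑ i ∈ posIdx n, (σ⁻¹).val (Idx.zero n) i.neg * u i.neg := by
            rw [mulVec_apply_sum]
            rw [show (∑ k : Idx n, (σ⁻¹).val (Idx.zero n) k * (if k.1 < 0 then u k else 0))
                = ∑ k : Idx n, (if k.1 < 0 then (σ⁻¹).val (Idx.zero n) k * u k else 0) from
                Finset.sum_congr rfl fun k _ => by rw [mul_ite, mul_zero]]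
            rw [← Finset.sum_filter]
            exact sum_neg_reindex _
          rw [← h1]
          exact D.inv_mulVec_zero_mem hΔ hσU (by simpa using D.jdelta_zero hΔ)
        have hwfuG : D.wf u G ∈ I := by
          have hsplit : D.wf u G
              = (∑ i ∈ posIdx n,
                  D.bar (∑ k ∈ Finset.univ.erase (Idx.zero n), σ.val i k * d k) * u i.neg)
                + ∑ i ∈ posIdx n,
                    D.bar (σ.val i (Idx.zero n) * d (Idx.zero n)) * u i.neg := by
            simp only [OddFormRingData.wf]
            rw [← Finset.sum_add_distrib]
            refine Finset.sum_congr rfl fun i _ => ?_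
            have hGi : G i = (∑ k ∈ Finset.univ.erase (Idx.zero n), σ.val i k * d k)
                + σ.val i (Idx.zero n) * d (Idx.zero n) := by
              rw [hGdef, mulVec_apply_sum,
                ← Finset.sum_erase_add _ _ (Finset.mem_univ (Idx.zero n))]
            rw [hGi, D.bar_add, add_mul]
          rw [hsplit]
          refine hIΩ.1.add_mem _ (D.sum_mem_I hIΩ.1 _ _ fun i _ => hIΩ.1.mul_right _ _
            (hIΩ.1.bar_mem _ (D.sum_mem_I hIΩ.1 _ _ fun k hk => hIΩ.1.mul_left _ _
              (hd.1 k (Idx.ne_zero_iff.mp (Finset.mem_erase.mp hk).1))))) _ ?_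
          have hrw : (∑ i ∈ posIdx n, D.bar (σ.val i (Idx.zero n) * d (Idx.zero n)) * u i.neg)
              = D.bar (d (Idx.zero n)) * D.mu
                * (∑ i ∈ posIdx n, (σ⁻¹).val (Idx.zero n) i.neg * u i.neg) := by
            rw [Finset.mul_sum]
            refine Finset.sum_congr rfl fun i hi => ?_
            rw [D.bar_mul, D.bar_entry_pos hσU (mem_posIdx.mp hi)]
            noncomm_ring
          rw [hrw]
          exact D.bar_mu_mem_right hIΩ hd.2 hN
        have hcI : D.wf u G - D.wf v d ∈ I := D.sub_mem_I hIΩ.1 hwfuG hwfvd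
        have hzf : D.zf u G - D.zf v d
            = (D.wf u G - D.wf v d) - D.bar (D.wf u G - D.wf v d) * D.lam := by
          rw [D.zf_eq_bform u G, D.zf_eq_bform v d, hbeq, D.bar_sub]
          noncomm_ring
        have hfin := D.omegaMin_mem hIΩ hcI
        rwa [← hzf] at hfin
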